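/- Let R be a commutative Noetherian ring, M an R-module, and N a finitely generated R-module. Then Hom_R(N, M) = 0 if and only if (0 :_M ann_R(N)) = 0. -/

import Mathlib

open Submodule Polynomial

/-- If `J` is a prime containing the annihilator of a f.g. module `N`, then `N/JN` has a
"non-torsion" element over `R/J`. -/
lemma aux_exists_nontorsion {R : Type*} [CommRing R]
    {N : Type*} [AddCommGroup N] [Module R N] [Module.Finite R N]
    {J : Ideal R} (hJ : J.IsPrime) (hIJ : (⊤ : Submodule R N).annihilator ≤ J) :
    ∃ n : N, ∀ s : R, s • n ∈ (J • ⊤ : Submodule R N) → s ∈ J := by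
  classical
  by_contra hcon
  push_neg at hcon
  obtain ⟨gens, hgens⟩ := Module.Finite.fg_top (R := R) (M := N)
  choose sf hmem hnot using hcon
  set s : R := ∏ g ∈ gens, sf g with hs
  have hsJ : s ∉ J := by
    intro h
    haveI := hJ
    obtain ⟨g, hg, hgJ⟩ := Ideal.IsPrime.prod_mem_iff.mp h
    exact hnot g hgJ
  have hrange : ∀ n : N, s • n ∈ (J • ⊤ : Submodule R N) := by
    intro n
    have hn : n ∈ Submodule.span R (gens : Set N) := hgens ▸ Submodule.mem_top
    induction hn using Submodule.span_induction with
    | mem g hg =>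
      have : s • g = (∏ x ∈ gens.erase g, sf x) • (sf g • g) := by
        rw [smul_smul, Finset.prod_erase_mul _ _ hg]
      rw [this]
      exact Submodule.smul_mem _ _ (hmem g)
    | zero => simp
    | add a b _ _ ha hb => rw [smul_add]; exact Submodule.add_mem _ ha hb
    | smul r a _ ha => rw [smul_comm]; exact Submodule.smul_mem _ _ ha
  obtain ⟨p, hmonic, -, hcoeff, heval⟩ :=
    LinearMap.exists_monic_and_coeff_mem_pow_and_aeval_eq_zero_of_range_le_smul R
      (s • (LinearMap.id : N →ₗ[R] N)) J (by
        rintro _ ⟨n, rfl⟩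
        exact hrange n)
  have keval : ∀ n : N, p.eval s • n = 0 := by
    intro n
    have h1 : (s • (LinearMap.id : N →ₗ[R] N)) = algebraMap R (Module.End R N) s := by
      ext n; simp [Module.algebraMap_end_apply]
    rw [h1] at heval
    have h2 : Polynomial.aeval (algebraMap R (Module.End R N) s) p
        = algebraMap R (Module.End R N) (p.eval s) := by
      rw [Polynomial.aeval_algebraMap_apply, Polynomial.aeval_def, Polynomial.eval₂_eq_eval_map,
        Algebra.algebraMap_self, Polynomial.map_id]
    rw [h2] at heval
    have := congrArg (fun φ : Module.End R N => φ n) heval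
    simpa [Module.algebraMap_end_apply] using this
  have hevalJ : p.eval s ∈ J := by
    refine hIJ ?_
    rw [Submodule.mem_annihilator]
    exact fun n _ => keval n
  set d := p.natDegree with hd
  have hpow : s ^ d ∈ J := by
    have h1 : p.eval s = (∑ i ∈ Finset.range d, p.coeff i * s ^ i) + 1 * s ^ d := by
      rw [Polynomial.eval_eq_sum_range, Finset.sum_range_succ, hmonic.coeff_natDegree]
    have hsum : (∑ i ∈ Finset.range d, p.coeff i * s ^ i) ∈ J := by
      refine Ideal.sum_mem _ fun i hi => Ideal.mul_mem_right _ _ ?_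
      have hid : p.coeff i ∈ J ^ (d - i) := hcoeff i
      exact Ideal.pow_le_self (Nat.sub_ne_zero_of_lt (Finset.mem_range.mp hi)) hid
    have : (1 : R) * s ^ d = p.eval s - ∑ i ∈ Finset.range d, p.coeff i * s ^ i := by
      rw [h1]; ring
    rw [one_mul] at this
    rw [this]
    exact Ideal.sub_mem _ hevalJ hsum
  exact hsJ (hJ.mem_of_pow_mem d hpow)

/-- A f.g. module over a domain with a non-torsion element admits a functional not
vanishing on that element. -/
lemma aux_exists_functional {D : Type*} [CommRing D] [IsDomain D]
    {V : Type*} [AddCommGroup V] [Module D V] [Module.Finite D V]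
    (v : V) (hv : ∀ d : D, d • v = 0 → d = 0) :
    ∃ g : V →ₗ[D] D, g v ≠ 0 := by
  classical
  let K := FractionRing D
  let VK := LocalizedModule (nonZeroDivisors D) V
  let ℓ : V →ₗ[D] VK := LocalizedModule.mkLinearMap (nonZeroDivisors D) V
  have hw : ℓ v ≠ 0 := by
    intro h
    obtain ⟨c, hc⟩ := (IsLocalizedModule.eq_zero_iff (nonZeroDivisors D) ℓ).mp h
    exact nonZeroDivisors.ne_zero c.2 (hv c.1 hc)
  let b := Module.Basis.ofVectorSpace K VK
  have hrepr : b.repr (ℓ v) ≠ 0 := fun h => hw (by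
    have := congrArg b.repr.symm h
    simpa using this)
  obtain ⟨i, hi⟩ := DFunLike.ne_iff.mp hrepr
  let φ : VK →ₗ[K] K := b.coord i
  have hφ : φ (ℓ v) ≠ 0 := by simpa [φ, Module.Basis.coord_apply] using hi
  let h : V →ₗ[D] K := (φ.restrictScalars D).comp ℓ
  obtain ⟨gens, hgens⟩ := Module.Finite.fg_top (R := D) (M := V)
  obtain ⟨c, hc⟩ := IsLocalization.exist_integer_multiples (nonZeroDivisors D) gens
    (fun g : V => h g)
  let h' : V →ₗ[D] K := (c : D) • h
  have hmem : ∀ u : V, h' u ∈ LinearMap.range (Algebra.linearMap D K) := by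
    intro u
    have hu : u ∈ Submodule.span D (gens : Set V) := hgens ▸ Submodule.mem_top
    induction hu using Submodule.span_induction with
    | mem g hg =>
      obtain ⟨dd, hdd⟩ := hc g hg
      refine ⟨dd, ?_⟩
      simpa [h', Submonoid.smul_def, Algebra.linearMap_apply] using hdd
    | zero => simp
    | add a b _ _ ha hb => rw [map_add]; exact Submodule.add_mem _ ha hb
    | smul r a _ ha => rw [map_smul]; exact Submodule.smul_mem _ _ ha
  have hinj : Function.Injective (Algebra.linearMap D K) := IsFractionRing.injective D K
  let e : D ≃ₗ[D] LinearMap.range (Algebra.linearMap D K) := LinearEquiv.ofInjective _ hinj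
  refine ⟨(e.symm.toLinearMap).comp (h'.codRestrict _ hmem), ?_⟩
  intro h0
  have h1 : h'.codRestrict _ hmem v = 0 := by
    have h0' : e.symm (h'.codRestrict _ hmem v) = 0 := h0
    have := congrArg e h0'
    simpa using this
  have h2 : h' v = 0 := congrArg Subtype.val h1
  have h3 : h' v = algebraMap D K (c : D) * φ (ℓ v) := by
    simp [h', h, Algebra.smul_def]
  rw [h3] at h2
  rcases mul_eq_zero.mp h2 with h4 | h4
  · exact nonZeroDivisors.ne_zero c.2 ((IsFractionRing.to_map_eq_zero_iff (K := K)).mp h4)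
  · exact hφ h4

/-- For a Noetherian ring `R`, an `R`-module `M` and a finitely generated `R`-module `N`:
`Hom_R(N, M) = 0` if and only if `(0 :_M ann_R N) = 0`. -/
theorem hom_eq_zero_iff_annihilator_torsion_eq_zero
    {R : Type*} [CommRing R] [IsNoetherianRing R]
    (M : Type*) [AddCommGroup M] [Module R M]
    (N : Type*) [AddCommGroup N] [Module R N] [Module.Finite R N] :
    (∀ f : N →ₗ[R] M, f = 0) ↔
      ∀ x : M, (∀ a ∈ (⊤ : Submodule R N).annihilator, a • x = 0) → x = 0 := by
  constructor
  · intro hHom x hIx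
    by_contra hx
    obtain ⟨J, hJass, hxJ⟩ := exists_le_isAssociatedPrime_of_isNoetherianRing R x hx
    obtain ⟨hJprime, y, hJy⟩ := (isAssociatedPrime_iff).mp hJass
    haveI := hJprime
    have hIJ : (⊤ : Submodule R N).annihilator ≤ J := by
      intro a ha
      refine hxJ ?_
      rw [Submodule.mem_colon_singleton, Submodule.mem_bot]
      exact hIx a ha
    obtain ⟨n₀, hn₀⟩ := aux_exists_nontorsion hJprime hIJ
    let D := R ⧸ J
    let V := N ⧸ (J • ⊤ : Submodule R N)
    haveI : Module.Finite D V := Module.Finite.of_restrictScalars_finite R D V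
    let v₀ : V := Submodule.Quotient.mk n₀
    have hv₀ : ∀ d : D, d • v₀ = 0 → d = 0 := by
      intro d hd
      obtain ⟨s, rfl⟩ := Ideal.Quotient.mk_surjective d
      have hmk : Ideal.Quotient.mk J s • v₀ = Submodule.Quotient.mk (s • n₀) :=
        rfl
      rw [hmk, Submodule.Quotient.mk_eq_zero] at hd
      exact Ideal.Quotient.eq_zero_iff_mem.mpr (hn₀ s hd)
    obtain ⟨g, hg⟩ := aux_exists_functional (D := D) v₀ hv₀
    let ψ : R →ₗ[R] M := LinearMap.toSpanSingleton R M y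
    have hker : J ≤ LinearMap.ker ψ := by
      intro s hsJ
      rw [LinearMap.mem_ker]
      have hmem : s ∈ (⊥ : Submodule R M).colon {y} := hJy ▸ hsJ
      simpa [ψ, LinearMap.toSpanSingleton_apply] using
        Submodule.mem_colon_singleton.mp hmem
    let lift : D →ₗ[R] M := Submodule.liftQ J ψ hker
    let f : N →ₗ[R] M :=
      lift.comp ((g.restrictScalars R).comp ((J • ⊤ : Submodule R N).mkQ))
    have hf : f n₀ ≠ 0 := by
      intro h0
      obtain ⟨r, hr⟩ := Ideal.Quotient.mk_surjective (g v₀)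
      have hr' : (Submodule.Quotient.mk r : D) = g v₀ := hr
      have h5 : ψ r = 0 := by
        have hl : lift (Submodule.Quotient.mk r) = ψ r := Submodule.liftQ_apply J ψ r
        rw [← hl, hr']
        exact h0
      have h6 : r ∈ J := by
        rw [hJy, Submodule.mem_colon_singleton, Submodule.mem_bot]
        simpa [ψ, LinearMap.toSpanSingleton_apply] using h5
      have : g v₀ = 0 := by
        rw [← hr]
        exact Ideal.Quotient.eq_zero_iff_mem.mpr h6
      exact hg this
    exact hf (by rw [hHom f]; rfl)
  · intro hM f
    ext n
    have hz : ∀ a ∈ (⊤ : Submodule R N).annihilator, a • f n = 0 := by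
      intro a ha
      rw [← map_smul]
      have hn : a • n = 0 := Submodule.mem_annihilator.mp ha n Submodule.mem_top
      rw [hn, map_zero]
    simpa using hM (f n) hz
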